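/- Let X_1, X_2, … be a sequence of random variables taking values in a (real) Banach space with norm ‖·‖, and suppose there are constants A > 0, a > 0, b ≥ 0 and γ ∈ (0,2) such that for all integers m ≥ 0, n ≥ 1 and all reals t ≥ 0, P{‖S(m+1, m+n)‖ > t} ≤ A·exp(−a t² / (n + b t^γ)). Then for every 0 < c < a there exists a constant C > 0 (depending only on A, a, b, γ and c) such that for all integers n ≥ 1, m ≥ 0 and all reals t ≥ 0, P{max_{m+1 ≤ j ≤ m+n} ‖S(m+1, j)‖ > t} ≤ C·exp(−c t² / (n + b t^γ)). -/

import Mathlib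

set_option maxHeartbeats 1000000


open MeasureTheory Finset

private lemma rpow_le_exp_aux (β : ℝ) (hβ : 0 ≤ β) :
    ∃ K : ℝ, 1 ≤ K ∧ ∀ y : ℝ, 0 ≤ y → y ^ β ≤ K * Real.exp y := by
  obtain ⟨N, hN⟩ := exists_nat_ge β
  set M : ℝ := (N : ℝ) + 1 with hM
  have hMpos : (0:ℝ) < M := by positivity
  refine ⟨1 + M ^ (N+1), le_add_of_nonneg_right (by positivity), fun y hy => ?_⟩
  have hexp : (1:ℝ) ≤ Real.exp y := Real.one_le_exp hy
  have hMN : (0:ℝ) ≤ M ^ (N+1) := by positivity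
  rcases le_or_gt y 1 with h1 | h1
  · have h0 : y ^ β ≤ 1 := Real.rpow_le_one hy h1 hβ
    nlinarith
  · have h2 : y ^ β ≤ y ^ (M : ℝ) := by
      apply Real.rpow_le_rpow_of_exponent_le h1.le
      rw [hM]; linarith
    have h3 : y ^ (M : ℝ) = y ^ (N+1 : ℕ) := by
      rw [← Real.rpow_natCast y (N+1)]
      congr 1
      push_cast [hM]; ring
    have h4 : y ≤ M * Real.exp (y / M) := by
      have h5 := Real.add_one_le_exp (y / M)
      have h6 : y / M * M = y := div_mul_cancel₀ y hMpos.ne'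
      nlinarith [Real.exp_pos (y / M)]
    have h5 : y ^ (N+1:ℕ) ≤ (M * Real.exp (y / M)) ^ (N+1:ℕ) :=
      pow_le_pow_left₀ hy h4 _
    have h6 : (M * Real.exp (y / M)) ^ (N+1:ℕ) = M ^ (N+1) * Real.exp y := by
      rw [mul_pow, ← Real.exp_nat_mul]
      congr 2
      push_cast
      field_simp
      exact hM.symm
    calc y ^ β ≤ y ^ (N+1:ℕ) := h3 ▸ h2
      _ ≤ M ^ (N+1) * Real.exp y := h6 ▸ h5
      _ ≤ (1 + M ^ (N+1)) * Real.exp y := by nlinarith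

private lemma neg_div_le_neg_div {s1 s2 d1 d2 : ℝ} (hd1 : 0 < d1) (hd2 : 0 < d2)
    (h : s2 * d1 ≤ s1 * d2) : -s1/d1 ≤ -s2/d2 := by
  rw [neg_div, neg_div, neg_le_neg_iff, div_le_div_iff₀ hd2 hd1]; exact h

/-- **Maximal Bernstein inequality for Banach space valued random variables**
(Kevei–Mason, Remark 6). If the partial sums `S(m+1, m+n) = ∑_{i=m+1}^{m+n} X i`
of a sequence of random variables with values in a real Banach space `B` satisfy
`P{‖S(m+1, m+n)‖ > t} ≤ A · exp(−a t² / (n + b t^γ))`,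
then for every `0 < c < a` there is a constant `C > 0` such that
`P{max_{m+1 ≤ j ≤ m+n} ‖S(m+1, j)‖ > t} ≤ C · exp(−c t² / (n + b t^γ))`. -/
theorem maximal_bernstein_banach
    {Ω : Type*} [MeasurableSpace Ω] (P : Measure Ω) [IsProbabilityMeasure P]
    (B : Type*) [NormedAddCommGroup B] [NormedSpace ℝ B] [CompleteSpace B]
    (X : ℕ → Ω → B) (A a b γ : ℝ)
    (hA : 0 < A) (ha : 0 < a) (hb : 0 ≤ b) (hγ : γ ∈ Set.Ioo (0 : ℝ) 2)
    (hBern : ∀ (m n : ℕ), 1 ≤ n → ∀ t : ℝ, 0 ≤ t →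
      P {ω | t < ‖∑ i ∈ Finset.Icc (m + 1) (m + n), X i ω‖}
        ≤ ENNReal.ofReal (A * Real.exp (-(a * t ^ 2) / (n + b * t ^ γ)))) :
    ∀ c : ℝ, 0 < c → c < a → ∃ C : ℝ, 0 < C ∧
      ∀ (m n : ℕ) (hn : 1 ≤ n), ∀ t : ℝ, 0 ≤ t →
        P {ω | t < (Finset.Icc (m + 1) (m + n)).sup'
              (Finset.nonempty_Icc.mpr (by omega))
              (fun j => ‖∑ i ∈ Finset.Icc (m + 1) j, X i ω‖)}
          ≤ ENNReal.ofReal (C * Real.exp (-(c * t ^ 2) / (n + b * t ^ γ))) := by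
  intro c hc hca
  obtain ⟨hγ0, hγ2⟩ := hγ
  -- the threshold-splitting parameter ε
  obtain ⟨ε, hεdef⟩ : ∃ x : ℝ, x = 1 - Real.sqrt ((a+c)/(2*a)) := ⟨_, rfl⟩
  have hfrac0 : 0 < (a+c)/(2*a) := by positivity
  have hfrac1 : (a+c)/(2*a) < 1 := by
    rw [div_lt_one (by positivity)]; linarith
  have hs0 : 0 < Real.sqrt ((a+c)/(2*a)) := Real.sqrt_pos.mpr hfrac0
  have hs1 : Real.sqrt ((a+c)/(2*a)) < 1 := by
    nlinarith [Real.sq_sqrt hfrac0.le, Real.sqrt_nonneg ((a+c)/(2*a))]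
  have hε0 : 0 < ε := by rw [hεdef]; linarith
  have hε1 : ε < 1 := by rw [hεdef]; linarith
  have hε2 : a * (1-ε)^2 = (a+c)/2 := by
    have h1 : (1-ε) = Real.sqrt ((a+c)/(2*a)) := by rw [hεdef]; ring
    rw [h1, Real.sq_sqrt hfrac0.le]
    field_simp
  -- the number of blocks q
  obtain ⟨q, hqdef⟩ : ∃ x : ℕ, x = ⌈(8:ℝ)/ε^2⌉₊ := ⟨_, rfl⟩
  have hq : (8:ℝ)/ε^2 ≤ q := by rw [hqdef]; exact Nat.le_ceil _
  have hεsq : ε^2 ≤ 1 := by nlinarith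
  have hq8 : (8:ℝ) ≤ q := le_trans (by rw [le_div_iff₀ (by positivity)]; nlinarith) hq
  have hq8' : 8 ≤ q := by exact_mod_cast hq8
  have hq0 : (0:ℝ) < q := by linarith
  -- the regime-splitting parameter Λ
  obtain ⟨Λ, hΛdef⟩ : ∃ x : ℝ, x = ε ^ (2-γ) / 4 := ⟨_, rfl⟩
  have hεp : 0 < ε ^ (2-γ) := Real.rpow_pos_of_pos hε0 _
  have hΛ0 : 0 < Λ := by rw [hΛdef]; positivity
  have hΛ1 : Λ ≤ 1 := by
    have h1 : ε ^ (2-γ) ≤ 1 := Real.rpow_le_one hε0.le hε1.le (by linarith)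
    rw [hΛdef]; linarith
  have hΛγ : ε ^ γ * Λ ≤ ε^2/4 := by
    have h2 : ε ^ γ * ε ^ (2-γ) = ε^2 := by
      rw [← Real.rpow_add hε0, show γ + (2-γ) = ((2:ℕ):ℝ) by push_cast; ring,
        Real.rpow_natCast]
    rw [show ε^γ * Λ = (ε^γ * ε^(2-γ))/4 by rw [hΛdef]; ring, h2]
  -- the constant from the sub-exponential estimate
  obtain ⟨K, hK1, hKle⟩ := rpow_le_exp_aux (γ/(2-γ)) (div_nonneg hγ0.le (by linarith))
  obtain ⟨C₁, hC₁def⟩ : ∃ x : ℝ, x = A/Λ * (b * (2*b/((a-c)*Λ)) ^ (γ/(2-γ)) * K) := ⟨_, rfl⟩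
  have hC₁0 : 0 ≤ C₁ := by
    rw [hC₁def]
    have h1 := Real.rpow_nonneg (div_nonneg (by linarith) (mul_nonneg (by linarith) hΛ0.le) : (0:ℝ) ≤ 2*b/((a-c)*Λ)) (γ/(2-γ))
    have h2 : (0:ℝ) ≤ A/Λ := by positivity
    have h3 : (0:ℝ) ≤ K := by linarith
    exact mul_nonneg h2 (mul_nonneg (mul_nonneg hb h1) h3)
  obtain ⟨C, hCdef⟩ : ∃ x : ℝ, x = max (max C₁ (2*q*A)) (max (2*(q:ℝ)) 1) := ⟨_, rfl⟩
  have hC1 : 1 ≤ C := by rw [hCdef]; exact le_trans (le_max_right _ _) (le_max_right _ _)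
  have hC0 : 0 < C := lt_of_lt_of_le one_pos hC1
  have hCqA : 2*q*A ≤ C := by rw [hCdef]; exact le_trans (le_max_right _ _) (le_max_left _ _)
  have hCq : 2*(q:ℝ) ≤ C := by rw [hCdef]; exact le_trans (le_max_left _ _) (le_max_right _ _)
  have hCC₁ : C₁ ≤ C := by rw [hCdef]; exact le_trans (le_max_left _ _) (le_max_left _ _)
  refine ⟨C, hC0, ?_⟩
  have key : ∀ (n : ℕ) (hn : 1 ≤ n) (m : ℕ) (t : ℝ), 0 ≤ t →
      P {ω | t < (Finset.Icc (m + 1) (m + n)).sup'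
              (Finset.nonempty_Icc.mpr (by omega))
              (fun j => ‖∑ i ∈ Finset.Icc (m + 1) j, X i ω‖)}
          ≤ ENNReal.ofReal (C * Real.exp (-(c * t ^ 2) / (n + b * t ^ γ))) := by
    intro n
    induction n using Nat.strong_induction_on with
    | _ n IH =>
    intro hn m t ht
    have hbt : (0:ℝ) ≤ b * t ^ γ := mul_nonneg hb (Real.rpow_nonneg ht _)
    have hn1R : (1:ℝ) ≤ (n:ℝ) := by exact_mod_cast hn
    have hD : (0:ℝ) < (n:ℝ) + b * t ^ γ := by linarith
    -- the union bound, used in the first two regimes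
    have hunion : P {ω | t < (Finset.Icc (m + 1) (m + n)).sup'
              (Finset.nonempty_Icc.mpr (by omega))
              (fun j => ‖∑ i ∈ Finset.Icc (m + 1) j, X i ω‖)}
          ≤ ENNReal.ofReal ((n:ℝ) * (A * Real.exp (-(a * t ^ 2) / (n + b * t ^ γ)))) := by
      have hsub : {ω | t < (Finset.Icc (m + 1) (m + n)).sup'
              (Finset.nonempty_Icc.mpr (by omega))
              (fun j => ‖∑ i ∈ Finset.Icc (m + 1) j, X i ω‖)}
          ⊆ ⋃ j ∈ Finset.Icc (m+1) (m+n), {ω | t < ‖∑ i ∈ Finset.Icc (m + 1) j, X i ω‖} := by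
        intro ω hω
        simp only [Set.mem_setOf_eq, Finset.lt_sup'_iff] at hω
        obtain ⟨j, hj, hjt⟩ := hω
        exact Set.mem_biUnion hj hjt
      calc P _ ≤ P (⋃ j ∈ Finset.Icc (m+1) (m+n),
            {ω | t < ‖∑ i ∈ Finset.Icc (m + 1) j, X i ω‖}) := measure_mono hsub
        _ ≤ ∑ j ∈ Finset.Icc (m+1) (m+n),
            P {ω | t < ‖∑ i ∈ Finset.Icc (m + 1) j, X i ω‖} := measure_biUnion_finset_le _ _
        _ ≤ ∑ _j ∈ Finset.Icc (m+1) (m+n),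
            ENNReal.ofReal (A * Real.exp (-(a * t ^ 2) / (n + b * t ^ γ))) := by
            apply Finset.sum_le_sum
            intro j hj
            rw [Finset.mem_Icc] at hj
            have h1 := hBern m (j - m) (by omega) t ht
            rw [show m + (j - m) = j by omega] at h1
            refine le_trans h1 (ENNReal.ofReal_le_ofReal ?_)
            apply mul_le_mul_of_nonneg_left _ hA.le
            apply Real.exp_le_exp.mpr
            have hjm1 : (1:ℝ) ≤ ((j - m : ℕ):ℝ) := by
              have : 1 ≤ j - m := by omega
              exact_mod_cast this
            have hjmn : ((j - m : ℕ):ℝ) ≤ (n:ℝ) := by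
              have : j - m ≤ n := by omega
              exact_mod_cast this
            apply neg_div_le_neg_div (by linarith) hD
            have h2 : (0:ℝ) ≤ a * t^2 := mul_nonneg ha.le (sq_nonneg t)
            nlinarith [mul_le_mul_of_nonneg_left hjmn h2]
        _ = ENNReal.ofReal ((n:ℝ) * (A * Real.exp (-(a * t ^ 2) / (n + b * t ^ γ)))) := by
            rw [Finset.sum_const, Nat.card_Icc, show m + n + 1 - (m+1) = n by omega,
              nsmul_eq_mul, ← ENNReal.ofReal_natCast n,
              ← ENNReal.ofReal_mul (by positivity)]
    by_cases hcase1 : Λ * n < b * t ^ γ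
    · -- γ-dominated regime: union bound suffices
      refine le_trans hunion (ENNReal.ofReal_le_ofReal ?_)
      -- γ-dominated regime: union bound suffices
      have h0 : (0:ℝ) < Λ * n := mul_pos hΛ0 (by linarith)
      have hbtpos : (0:ℝ) < b * t ^ γ := lt_trans h0 hcase1
      have hb0 : (0:ℝ) < b := by
        rcases hb.lt_or_eq with h | h
        · exact h
        · exfalso; rw [← h] at hbtpos; simp at hbtpos
      have ht0 : (0:ℝ) < t := by
        rcases ht.lt_or_eq with h | h
        · exact h
        · exfalso; rw [← h, Real.zero_rpow hγ0.ne'] at hbtpos; simp at hbtpos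
      have htγ : (0:ℝ) < t ^ γ := Real.rpow_pos_of_pos ht0 _
      have hy0 : (0:ℝ) ≤ (a-c)*Λ/(2*b) * t^((2:ℝ)-γ) :=
        mul_nonneg (div_nonneg (mul_nonneg (by linarith) hΛ0.le) (by linarith))
          (Real.rpow_nonneg ht _)
      have hDle : (n:ℝ) + b*t^γ ≤ 2*(b*t^γ)/Λ := by
        have h1 : (n:ℝ) ≤ b*t^γ/Λ := by
          rw [le_div_iff₀ hΛ0]; linarith [mul_comm (n:ℝ) Λ]
        have h2 : b*t^γ ≤ b*t^γ/Λ := by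
          rw [le_div_iff₀ hΛ0]
          linarith [mul_le_mul_of_nonneg_left hΛ1 hbtpos.le]
        have h3 : b*t^γ/Λ + b*t^γ/Λ = 2*(b*t^γ)/Λ := by ring
        linarith
      have h3 : t^((2:ℝ)-γ) = t^2 / t^γ := by
        rw [Real.rpow_sub ht0]
        congr 1
        rw [show ((2:ℝ)) = ((2:ℕ):ℝ) by norm_num, Real.rpow_natCast]
      have h4 : (a-c)*Λ/(2*b) * t^((2:ℝ)-γ) = (a-c)*t^2/(2*(b*t^γ)/Λ) := by
        rw [h3]; field_simp
      have hyD : (a-c)*Λ/(2*b) * t^((2:ℝ)-γ) ≤ (a-c)*t^2/((n:ℝ)+b*t^γ) := by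
        rw [h4, div_le_div_iff₀ (by positivity) hD]
        have h5 : (0:ℝ) ≤ (a-c)*t^2 := mul_nonneg (by linarith) (sq_nonneg t)
        exact mul_le_mul_of_nonneg_left hDle h5
      -- t^γ ≤ (2b/((a-c)Λ))^β * K * exp y
      have hne2γ : (2:ℝ) - γ ≠ 0 := by linarith
      have h5 : (t^((2:ℝ)-γ))^(γ/(2-γ)) = t^γ := by
        rw [← Real.rpow_mul ht0.le]
        congr 1
        field_simp
      have h6 : ((a-c)*Λ/(2*b) * t^((2:ℝ)-γ)) * (2*b/((a-c)*Λ)) = t^((2:ℝ)-γ) := by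
        have hca' : a - c ≠ 0 := by linarith
        field_simp
      have h7 : t^γ ≤ (2*b/((a-c)*Λ))^(γ/(2-γ)) * (K * Real.exp ((a-c)*Λ/(2*b) * t^((2:ℝ)-γ))) := by
        have hM0 : (0:ℝ) ≤ 2*b/((a-c)*Λ) :=
          div_nonneg (by linarith) (mul_nonneg (by linarith) hΛ0.le)
        calc t^γ = (t^((2:ℝ)-γ))^(γ/(2-γ)) := h5.symm
          _ = (((a-c)*Λ/(2*b) * t^((2:ℝ)-γ)) * (2*b/((a-c)*Λ)))^(γ/(2-γ)) := by rw [h6]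
          _ = ((a-c)*Λ/(2*b) * t^((2:ℝ)-γ))^(γ/(2-γ)) * (2*b/((a-c)*Λ))^(γ/(2-γ)) :=
              Real.mul_rpow hy0 hM0
          _ ≤ (K * Real.exp ((a-c)*Λ/(2*b) * t^((2:ℝ)-γ))) * (2*b/((a-c)*Λ))^(γ/(2-γ)) := by
              apply mul_le_mul_of_nonneg_right (hKle _ hy0) (Real.rpow_nonneg hM0 _)
          _ = (2*b/((a-c)*Λ))^(γ/(2-γ)) * (K * Real.exp ((a-c)*Λ/(2*b) * t^((2:ℝ)-γ))) := by ring
      have h8 : (n:ℝ)*A ≤ C * Real.exp ((a-c)*t^2/((n:ℝ)+b*t^γ)) := by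
        have hM0 : (0:ℝ) ≤ 2*b/((a-c)*Λ) :=
          div_nonneg (by linarith) (mul_nonneg (by linarith) hΛ0.le)
        have hMβ : (0:ℝ) ≤ (2*b/((a-c)*Λ))^(γ/(2-γ)) := Real.rpow_nonneg hM0 _
        have hey : (0:ℝ) < Real.exp ((a-c)*Λ/(2*b) * t^((2:ℝ)-γ)) := Real.exp_pos _
        have h9 : (n:ℝ) ≤ b*t^γ/Λ := by
          rw [le_div_iff₀ hΛ0]; linarith [mul_comm (n:ℝ) Λ]
        have h10 : (n:ℝ)*A ≤ A/Λ * (b*t^γ) := by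
          have : (n:ℝ)*A ≤ (b*t^γ/Λ)*A := mul_le_mul_of_nonneg_right h9 hA.le
          calc (n:ℝ)*A ≤ (b*t^γ/Λ)*A := this
            _ = A/Λ * (b*t^γ) := by field_simp
        have h11 : A/Λ * (b*t^γ) ≤ C₁ * Real.exp ((a-c)*Λ/(2*b) * t^((2:ℝ)-γ)) := by
          rw [hC₁def]
          have h12 : b*t^γ ≤ b * ((2*b/((a-c)*Λ))^(γ/(2-γ)) * (K * Real.exp ((a-c)*Λ/(2*b) * t^((2:ℝ)-γ)))) :=
            mul_le_mul_of_nonneg_left h7 hb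
          have h13 : (0:ℝ) ≤ A/Λ := by positivity
          calc A/Λ * (b*t^γ)
              ≤ A/Λ * (b * ((2*b/((a-c)*Λ))^(γ/(2-γ)) * (K * Real.exp ((a-c)*Λ/(2*b) * t^((2:ℝ)-γ))))) :=
                mul_le_mul_of_nonneg_left h12 h13
            _ = A / Λ * (b * (2 * b / ((a - c) * Λ)) ^ (γ / (2 - γ)) * K) *
                Real.exp ((a-c)*Λ/(2*b) * t^((2:ℝ)-γ)) := by ring
        have h14 : C₁ * Real.exp ((a-c)*Λ/(2*b) * t^((2:ℝ)-γ)) ≤ C * Real.exp ((a-c)*Λ/(2*b) * t^((2:ℝ)-γ)) :=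
          mul_le_mul_of_nonneg_right hCC₁ hey.le
        have h15 : C * Real.exp ((a-c)*Λ/(2*b) * t^((2:ℝ)-γ)) ≤ C * Real.exp ((a-c)*t^2/((n:ℝ)+b*t^γ)) :=
          mul_le_mul_of_nonneg_left (Real.exp_le_exp.mpr hyD) hC0.le
        linarith
      have h16 : Real.exp ((a-c)*t^2/((n:ℝ)+b*t^γ)) * Real.exp (-(a*t^2)/((n:ℝ)+b*t^γ))
          = Real.exp (-(c*t^2)/((n:ℝ)+b*t^γ)) := by
        rw [← Real.exp_add]; congr 1; ring
      have hea : (0:ℝ) < Real.exp (-(a*t^2)/((n:ℝ)+b*t^γ)) := Real.exp_pos _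
      calc (n:ℝ) * (A * Real.exp (-(a*t^2)/((n:ℝ)+b*t^γ)))
          = ((n:ℝ)*A) * Real.exp (-(a*t^2)/((n:ℝ)+b*t^γ)) := by ring
        _ ≤ (C * Real.exp ((a-c)*t^2/((n:ℝ)+b*t^γ))) * Real.exp (-(a*t^2)/((n:ℝ)+b*t^γ)) :=
            mul_le_mul_of_nonneg_right h8 hea.le
        _ = C * (Real.exp ((a-c)*t^2/((n:ℝ)+b*t^γ)) * Real.exp (-(a*t^2)/((n:ℝ)+b*t^γ))) := by ring
        _ = C * Real.exp (-(c*t^2)/((n:ℝ)+b*t^γ)) := by rw [h16]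
    · push_neg at hcase1
      by_cases hnq : n ≤ q
      · -- few terms: union bound suffices
        refine le_trans hunion (ENNReal.ofReal_le_ofReal ?_)
        have h1 : Real.exp (-(a * t ^ 2) / (n + b * t ^ γ))
            ≤ Real.exp (-(c * t ^ 2) / (n + b * t ^ γ)) := by
          apply Real.exp_le_exp.mpr
          apply neg_div_le_neg_div hD hD
          exact mul_le_mul_of_nonneg_right
            (mul_le_mul_of_nonneg_right hca.le (sq_nonneg t)) hD.le
        have h2 : (n:ℝ) ≤ q := by exact_mod_cast hnq
        have he : 0 < Real.exp (-(a * t ^ 2) / (n + b * t ^ γ)) := Real.exp_pos _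
        have he' : 0 < Real.exp (-(c * t ^ 2) / (n + b * t ^ γ)) := Real.exp_pos _
        have hqAC : (q:ℝ)*A ≤ C := by nlinarith [mul_nonneg hq0.le hA.le]
        calc (n:ℝ) * (A * Real.exp (-(a * t ^ 2) / (n + b * t ^ γ)))
            ≤ (q:ℝ) * (A * Real.exp (-(a * t ^ 2) / (n + b * t ^ γ))) :=
              mul_le_mul_of_nonneg_right h2 (by positivity)
          _ ≤ (q:ℝ) * (A * Real.exp (-(c * t ^ 2) / (n + b * t ^ γ))) :=
              mul_le_mul_of_nonneg_left (mul_le_mul_of_nonneg_left h1 hA.le) hq0.le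
          _ = ((q:ℝ) * A) * Real.exp (-(c * t ^ 2) / (n + b * t ^ γ)) := by ring
          _ ≤ C * Real.exp (-(c * t ^ 2) / (n + b * t ^ γ)) :=
              mul_le_mul_of_nonneg_right hqAC he'.le
      · push_neg at hnq
        by_cases htriv : 1 ≤ C * Real.exp (-(c * t ^ 2) / (n + b * t ^ γ))
        · calc P _ ≤ 1 := prob_le_one
            _ ≤ ENNReal.ofReal (C * Real.exp (-(c * t ^ 2) / (n + b * t ^ γ))) :=
              ENNReal.one_le_ofReal.mpr htriv
        · push_neg at htriv
          -- main case: decompose [m+1, m+n] into at most q blocks of length k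
          obtain ⟨k, hkdef⟩ : ∃ x : ℕ, x = n / q + 1 := ⟨_, rfl⟩
          have hk0 : 0 < k := by rw [hkdef]; exact Nat.succ_pos _
          have hmod : n % q < q := Nat.mod_lt n (by omega)
          have hdm : q * (n / q) + n % q = n := Nat.div_add_mod n q
          have hnqk : n < q * k := by
            calc n = q * (n/q) + n % q := hdm.symm
              _ < q * (n/q) + q := Nat.add_lt_add_left hmod _
              _ = q * k := by rw [hkdef]; ring
          have h8 : n / q ≤ n / 8 := Nat.div_le_div_left hq8' (by norm_num)
          have h10 : n / 8 + 1 < n := by omega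
          have hkn : k < n := by
            rw [hkdef]
            exact lt_of_le_of_lt (Nat.add_le_add_right h8 1) h10
          obtain ⟨p, hpdef⟩ : ∃ x : ℕ, x = (n-1)/k + 1 := ⟨_, rfl⟩
          have hp0 : 0 < p := by rw [hpdef]; exact Nat.succ_pos _
          have hjkn : ∀ j, j < p → j * k ≤ n - 1 := by
            intro j hj
            have h1 : j ≤ (n-1)/k := by
              rw [hpdef] at hj; exact Nat.lt_succ_iff.mp hj
            calc j * k ≤ ((n-1)/k) * k := Nat.mul_le_mul_right k h1
              _ ≤ n - 1 := Nat.div_mul_le_self _ _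
          have hpq : p ≤ q := by
            rw [hpdef]
            have h1 : (n-1)/k < q :=
              Nat.div_lt_of_lt_mul
                (by rw [Nat.mul_comm k q]; exact lt_of_le_of_lt (Nat.sub_le n 1) hnqk)
            exact Nat.succ_le_of_lt h1
          -- real bounds on k and on b (ε t)^γ
          have hkR : (k:ℝ) ≤ ε^2 * n / 4 := by
            have h1 : ((n/q : ℕ):ℝ) ≤ (n:ℝ)/(q:ℝ) := Nat.cast_div_le
            have h2 : (1:ℝ) ≤ (n:ℝ)/(q:ℝ) := by
              rw [le_div_iff₀ hq0]
              have h2' : (q:ℝ) ≤ (n:ℝ) := by exact_mod_cast hnq.le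
              linarith
            have h3 : (k:ℝ) = ((n/q : ℕ):ℝ) + 1 := by rw [hkdef]; push_cast; ring
            have h4 : (k:ℝ) ≤ 2 * ((n:ℝ)/(q:ℝ)) := by rw [h3]; linarith
            have h6 : 8 ≤ ε^2 * q := by
              rw [div_le_iff₀ (by positivity)] at hq
              linarith [mul_comm (ε^2) (q:ℝ)]
            have h5 : (n:ℝ)/(q:ℝ) ≤ ε^2 * n / 8 := by
              rw [div_le_div_iff₀ hq0 (by norm_num : (0:ℝ) < 8)]
              have h7 : (n:ℝ) * 8 ≤ (n:ℝ) * (ε^2 * q) :=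
                mul_le_mul_of_nonneg_left h6 (by linarith)
              linarith [mul_comm ((n:ℝ)) (ε^2 * (q:ℝ)), mul_assoc (ε^2) ((n:ℝ)) ((q:ℝ)),
                mul_comm ((n:ℝ)) ((q:ℝ))]
            linarith
          have hεt0 : (0:ℝ) ≤ ε * t := mul_nonneg hε0.le ht
          have hbtε : b * (ε*t)^γ ≤ ε^2 * n / 4 := by
            have h1 : (ε*t)^γ = ε^γ * t^γ := Real.mul_rpow hε0.le ht
            have hεγ0 : (0:ℝ) ≤ ε^γ := Real.rpow_nonneg hε0.le γ
            calc b*(ε*t)^γ = ε^γ * (b*t^γ) := by rw [h1]; ring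
              _ ≤ ε^γ * (Λ * n) := mul_le_mul_of_nonneg_left hcase1 hεγ0
              _ = (ε^γ * Λ) * n := by ring
              _ ≤ ε^2/4 * n := mul_le_mul_of_nonneg_right hΛγ (by linarith)
              _ = ε^2 * n/4 := by ring
          -- the events
          obtain ⟨F, hFdef⟩ : ∃ F' : ℕ → Set Ω, F' = fun j =>
            {ω | (1-ε)*t < ‖∑ i ∈ Finset.Icc (m+1) (m + j*k), X i ω‖} := ⟨_, rfl⟩
          obtain ⟨G, hGdef⟩ : ∃ G' : ℕ → Set Ω, G' = fun j =>
            {ω | ε*t < (Finset.Icc (m + j*k + 1) (m + j*k + max (min k (n - j*k)) 1)).sup'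
              (Finset.nonempty_Icc.mpr (Nat.add_le_add_left (le_max_right _ 1) _))
              (fun l => ‖∑ i ∈ Finset.Icc (m + j*k + 1) l, X i ω‖)} := ⟨_, rfl⟩
          -- the decomposition of the event
          have hsub2 : {ω | t < (Finset.Icc (m + 1) (m + n)).sup'
                (Finset.nonempty_Icc.mpr (by omega))
                (fun j => ‖∑ i ∈ Finset.Icc (m + 1) j, X i ω‖)}
              ⊆ (⋃ j ∈ Finset.Ico 1 p, F j) ∪ ⋃ j ∈ Finset.range p, G j := by
            intro ω hω
            simp only [Set.mem_setOf_eq, Finset.lt_sup'_iff] at hω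
            obtain ⟨j', hj'mem, hj't⟩ := hω
            rw [Finset.mem_Icc] at hj'mem
            have hd1 : 1 ≤ j' - m := by omega
            have hdn : j' - m ≤ n := by omega
            obtain ⟨d, hddef⟩ : ∃ x : ℕ, x = j' - m := ⟨_, rfl⟩
            have hj'd : j' = m + d := by omega
            rw [hj'd] at hj't
            obtain ⟨j, hjdef⟩ : ∃ x : ℕ, x = (d-1)/k := ⟨_, rfl⟩
            have hjp : j < p := by
              have h1 : (d-1)/k ≤ (n-1)/k := Nat.div_le_div_right (by omega)
              rw [hjdef, hpdef]
              exact Nat.lt_succ_of_le h1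
            have hjk1 : j * k ≤ d - 1 := by rw [hjdef]; exact Nat.div_mul_le_self _ _
            have hjk2 : d ≤ j * k + k := by
              have h1 := Nat.div_add_mod (d-1) k
              have h2 : (d-1) % k < k := Nat.mod_lt _ hk0
              obtain ⟨r, hr⟩ : ∃ r, (d-1) % k = r := ⟨_, rfl⟩
              obtain ⟨w, hw⟩ : ∃ w, k * ((d-1)/k) = w := ⟨_, rfl⟩
              rw [hr] at h2
              rw [hr, hw] at h1
              have h3 : j * k = w := by rw [hjdef, Nat.mul_comm]; exact hw
              rw [h3]
              omega
            have hjkd : j * k ≤ d := le_trans hjk1 (Nat.sub_le d 1)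
            have hsplit : ∑ i ∈ Finset.Icc (m+1) (m+d), X i ω
                = (∑ i ∈ Finset.Icc (m+1) (m + j*k), X i ω)
                  + ∑ i ∈ Finset.Icc (m + j*k + 1) (m+d), X i ω := by
              rw [Finset.Icc_add_one_left_eq_Ioc, Finset.Icc_add_one_left_eq_Ioc, Finset.Icc_add_one_left_eq_Ioc]
              exact (Finset.sum_Ioc_consecutive _ (Nat.le_add_right m (j*k))
                (Nat.add_le_add_left hjkd m)).symm
            have hmemG : m + d ∈ Finset.Icc (m + j*k + 1) (m + j*k + max (min k (n - j*k)) 1) := by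
              rw [Finset.mem_Icc]
              obtain ⟨w, hw⟩ : ∃ w, j * k = w := ⟨_, rfl⟩
              rw [hw] at hjk1 hjk2 ⊢
              have hwn : w ≤ n - 1 := by rw [← hw]; exact hjkn j hjp
              omega
            rcases Nat.eq_zero_or_pos j with hj0 | hj0
            · -- the first block: the whole partial sum is small
              right
              refine Set.mem_biUnion (Finset.mem_range.mpr hp0) ?_
              have hεtt : ε * t ≤ t := by
                have := mul_nonneg (show (0:ℝ) ≤ 1 - ε by linarith) ht
                linarith only [this]
              have h2 : ε*t < ‖∑ i ∈ Finset.Icc (m + j*k + 1) (m+d), X i ω‖ := by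
                have hz : j * k = 0 := by rw [hj0]; ring
                rw [hz]
                have hz2 : m + 0 + 1 = m + 1 := by ring
                rw [hz2]
                linarith
              rw [← hj0]
              simp only [hGdef, Set.mem_setOf_eq, Finset.lt_sup'_iff]
              exact ⟨m + d, hmemG, h2⟩
            · have hdisj : (1-ε)*t < ‖∑ i ∈ Finset.Icc (m+1) (m + j*k), X i ω‖
                  ∨ ε*t < ‖∑ i ∈ Finset.Icc (m + j*k + 1) (m+d), X i ω‖ := by
                by_contra hcon
                push_neg at hcon
                obtain ⟨h1, h2⟩ := hcon
                rw [hsplit] at hj't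
                have h3 := norm_add_le (∑ i ∈ Finset.Icc (m+1) (m + j*k), X i ω)
                  (∑ i ∈ Finset.Icc (m + j*k + 1) (m+d), X i ω)
                have h4 : (0:ℝ) ≤ t := ht
                linarith only [hj't, h1, h2, h3, h4]
              rcases hdisj with h | h
              · left
                refine Set.mem_biUnion (Finset.mem_Ico.mpr ⟨hj0, hjp⟩) ?_
                simp only [hFdef, Set.mem_setOf_eq]
                exact h
              · right
                refine Set.mem_biUnion (Finset.mem_range.mpr hjp) ?_
                simp only [hGdef, Set.mem_setOf_eq, Finset.lt_sup'_iff]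
                exact ⟨m + d, hmemG, h⟩
          -- bounds on the probabilities of the F-events
          have hFbound : ∀ j ∈ Finset.Ico 1 p, P (F j)
              ≤ ENNReal.ofReal (A * Real.exp (-(c * t^2)/((n:ℝ) + b*t^γ))) := by
            intro j hj
            rw [Finset.mem_Ico] at hj
            have hjk1 : 1 ≤ j * k := Nat.mul_le_mul hj.1 hk0
            have h1εt : (0:ℝ) ≤ (1-ε)*t := mul_nonneg (by linarith) ht
            have h1 := hBern m (j*k) hjk1 ((1-ε)*t) h1εt
            simp only [hFdef]
            refine le_trans h1 (ENNReal.ofReal_le_ofReal ?_)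
            apply mul_le_mul_of_nonneg_left _ hA.le
            apply Real.exp_le_exp.mpr
            have e3 : ((j*k:ℕ):ℝ) ≤ (n:ℝ) := by
              have := le_trans (hjkn j hj.2) (Nat.sub_le n 1)
              exact_mod_cast this
            have e3' : (1:ℝ) ≤ ((j*k:ℕ):ℝ) := by exact_mod_cast hjk1
            have e4 : b*((1-ε)*t)^γ ≤ b*t^γ := by
              apply mul_le_mul_of_nonneg_left _ hb
              apply Real.rpow_le_rpow h1εt _ hγ0.le
              linarith only [mul_nonneg hε0.le ht]
            have e4' : (0:ℝ) ≤ b*((1-ε)*t)^γ := mul_nonneg hb (Real.rpow_nonneg h1εt γ)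
            have hd1' : (0:ℝ) < ((j*k:ℕ):ℝ) + b*((1-ε)*t)^γ := by linarith
            apply neg_div_le_neg_div hd1' hD
            have e1 : a*((1-ε)*t)^2 = (a*(1-ε)^2)*t^2 := by ring
            have e2 : c ≤ a*(1-ε)^2 := by rw [hε2]; linarith
            have e6 : c*t^2 ≤ a*((1-ε)*t)^2 := by
              rw [e1]; exact mul_le_mul_of_nonneg_right e2 (sq_nonneg t)
            have e5 : ((j*k:ℕ):ℝ) + b*((1-ε)*t)^γ ≤ (n:ℝ) + b*t^γ := by linarith
            calc c*t^2 * (((j*k:ℕ):ℝ) + b*((1-ε)*t)^γ)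
                ≤ c*t^2 * ((n:ℝ)+b*t^γ) :=
                  mul_le_mul_of_nonneg_left e5 (mul_nonneg hc.le (sq_nonneg t))
              _ ≤ a*((1-ε)*t)^2 * ((n:ℝ)+b*t^γ) := mul_le_mul_of_nonneg_right e6 hD.le
          -- bounds on the probabilities of the G-events, using the induction hypothesis
          have hGbound : ∀ j ∈ Finset.range p, P (G j)
              ≤ ENNReal.ofReal (C * Real.exp (-(2*c*t^2)/((n:ℝ)+b*t^γ))) := by
            intro j hj
            rw [Finset.mem_range] at hj
            have hL1j : 1 ≤ max (min k (n - j*k)) 1 := le_max_right _ _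
            have hLkj : max (min k (n - j*k)) 1 ≤ k := max_le (min_le_left _ _) hk0
            have hLnj : max (min k (n - j*k)) 1 < n := lt_of_le_of_lt hLkj hkn
            have h1 := IH (max (min k (n - j*k)) 1) hLnj hL1j (m + j*k) (ε*t) hεt0
            simp only [hGdef]
            refine le_trans h1 (ENNReal.ofReal_le_ofReal ?_)
            apply mul_le_mul_of_nonneg_left _ hC0.le
            apply Real.exp_le_exp.mpr
            have g1 : ((max (min k (n - j*k)) 1 : ℕ):ℝ) ≤ (k:ℝ) := by exact_mod_cast hLkj
            have g1' : (1:ℝ) ≤ ((max (min k (n - j*k)) 1 : ℕ):ℝ) := by exact_mod_cast hL1j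
            have g0 : (0:ℝ) ≤ b*(ε*t)^γ := mul_nonneg hb (Real.rpow_nonneg hεt0 γ)
            have hdG : (0:ℝ) < ((max (min k (n - j*k)) 1 : ℕ):ℝ) + b*(ε*t)^γ := by
              linarith only [g1', g0]
            apply neg_div_le_neg_div hdG hD
            have g2 : ((max (min k (n - j*k)) 1 : ℕ):ℝ) + b*(ε*t)^γ
                ≤ ε^2*((n:ℝ)+b*t^γ)/2 := by
              have g5 : ε^2*(n:ℝ)/2 ≤ ε^2*((n:ℝ)+b*t^γ)/2 := by
                linarith only [mul_nonneg (sq_nonneg ε) hbt]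
              calc ((max (min k (n - j*k)) 1 : ℕ):ℝ) + b*(ε*t)^γ
                  ≤ (k:ℝ) + b*(ε*t)^γ := by linarith only [g1]
                _ ≤ ε^2*(n:ℝ)/4 + ε^2*(n:ℝ)/4 := by linarith only [hkR, hbtε]
                _ = ε^2*(n:ℝ)/2 := by ring
                _ ≤ ε^2*((n:ℝ)+b*t^γ)/2 := g5
            calc 2*c*t^2 * (((max (min k (n - j*k)) 1 : ℕ):ℝ) + b*(ε*t)^γ)
                ≤ 2*c*t^2 * (ε^2*((n:ℝ)+b*t^γ)/2) :=
                  mul_le_mul_of_nonneg_left g2 (by positivity)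
              _ = c*(ε*t)^2 * ((n:ℝ)+b*t^γ) := by ring
          -- put everything together
          have he : (0:ℝ) < Real.exp (-(c*t^2)/((n:ℝ)+b*t^γ)) := Real.exp_pos _
          calc P {ω | t < (Finset.Icc (m + 1) (m + n)).sup'
                (Finset.nonempty_Icc.mpr (by omega))
                (fun j => ‖∑ i ∈ Finset.Icc (m + 1) j, X i ω‖)}
              ≤ P ((⋃ j ∈ Finset.Ico 1 p, F j) ∪ ⋃ j ∈ Finset.range p, G j) :=
                measure_mono hsub2
            _ ≤ P (⋃ j ∈ Finset.Ico 1 p, F j) + P (⋃ j ∈ Finset.range p, G j) :=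
                measure_union_le _ _
            _ ≤ (∑ j ∈ Finset.Ico 1 p, P (F j)) + ∑ j ∈ Finset.range p, P (G j) :=
                add_le_add (measure_biUnion_finset_le _ _) (measure_biUnion_finset_le _ _)
            _ ≤ (∑ _j ∈ Finset.Ico 1 p, ENNReal.ofReal (A * Real.exp (-(c*t^2)/((n:ℝ)+b*t^γ))))
                + ∑ _j ∈ Finset.range p, ENNReal.ofReal (C * Real.exp (-(2*c*t^2)/((n:ℝ)+b*t^γ))) :=
                add_le_add (Finset.sum_le_sum hFbound) (Finset.sum_le_sum hGbound)
            _ = ((p-1 : ℕ): ENNReal) * ENNReal.ofReal (A * Real.exp (-(c*t^2)/((n:ℝ)+b*t^γ)))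
                + ((p:ℕ): ENNReal) * ENNReal.ofReal (C * Real.exp (-(2*c*t^2)/((n:ℝ)+b*t^γ))) := by
                rw [Finset.sum_const, Finset.sum_const, Nat.card_Ico, Finset.card_range,
                  nsmul_eq_mul, nsmul_eq_mul]
            _ ≤ ENNReal.ofReal ((q:ℝ) * (A * Real.exp (-(c*t^2)/((n:ℝ)+b*t^γ))))
                + ENNReal.ofReal ((q:ℝ) * (C * Real.exp (-(2*c*t^2)/((n:ℝ)+b*t^γ)))) := by
                apply add_le_add
                · rw [← ENNReal.ofReal_natCast (p-1), ← ENNReal.ofReal_mul (by positivity)]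
                  apply ENNReal.ofReal_le_ofReal
                  apply mul_le_mul_of_nonneg_right _ (by positivity)
                  have : ((p-1:ℕ):ℝ) ≤ (q:ℝ) := by
                    exact_mod_cast le_trans (Nat.sub_le p 1) hpq
                  exact this
                · rw [← ENNReal.ofReal_natCast p, ← ENNReal.ofReal_mul (by positivity)]
                  apply ENNReal.ofReal_le_ofReal
                  apply mul_le_mul_of_nonneg_right _ (by positivity)
                  exact_mod_cast hpq
            _ ≤ ENNReal.ofReal (C/2 * Real.exp (-(c*t^2)/((n:ℝ)+b*t^γ)))
                + ENNReal.ofReal (C/2 * Real.exp (-(c*t^2)/((n:ℝ)+b*t^γ))) := by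
                apply add_le_add <;> apply ENNReal.ofReal_le_ofReal
                · have hqA : (q:ℝ)*A ≤ C/2 := by linarith
                  linarith only [mul_le_mul_of_nonneg_right hqA he.le]
                · have hee : Real.exp (-(2*c*t^2)/((n:ℝ)+b*t^γ))
                      = Real.exp (-(c*t^2)/((n:ℝ)+b*t^γ)) * Real.exp (-(c*t^2)/((n:ℝ)+b*t^γ)) := by
                    rw [← Real.exp_add]; congr 1; ring
                  rw [hee]
                  have h1 : (q:ℝ) * Real.exp (-(c*t^2)/((n:ℝ)+b*t^γ))
                        * (C * Real.exp (-(c*t^2)/((n:ℝ)+b*t^γ)))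
                      ≤ (q:ℝ) * Real.exp (-(c*t^2)/((n:ℝ)+b*t^γ)) * 1 :=
                    mul_le_mul_of_nonneg_left htriv.le (by positivity)
                  have h2 : (q:ℝ) * Real.exp (-(c*t^2)/((n:ℝ)+b*t^γ))
                      ≤ C/2 * Real.exp (-(c*t^2)/((n:ℝ)+b*t^γ)) :=
                    mul_le_mul_of_nonneg_right (by linarith) he.le
                  linarith only [h1, h2]
            _ = ENNReal.ofReal (C * Real.exp (-(c*t^2)/((n:ℝ)+b*t^γ))) := by
                rw [← ENNReal.ofReal_add (by positivity) (by positivity)]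
                congr 1
                ring
  intro m n hn t ht
  exact key n hn m t ht
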